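/- Let (A,·,α) be a Hom-pre-Lie algebra and let L, R : A → gl(A) be defined by L_x y = x·y and R_x y = y·x. Define L⋆, R⋆ : A → gl(A*) by ⟨L⋆(x)(ξ), u⟩ = −⟨ξ, α^{-2}(α(x)·u)⟩ and ⟨R⋆(x)(ξ), u⟩ = −⟨ξ, α^{-2}(u·α(x))⟩ for x,u ∈ A, ξ ∈ A*. Then (A*, (α^{-1})*, L⋆ − R⋆, −R⋆) is a representation of the Hom-pre-Lie algebra (A,·,α), where (α^{-1})* denotes the transpose of α^{-1}. -/

import Mathlib

/-- A Hom-pre-Lie algebra structure on `A`: a bilinear product and an algebra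
morphism `α` satisfying the Hom-pre-Lie identity. -/
def IsHomPreLie {K A : Type*} [Field K] [AddCommGroup A] [Module K A]
    (mul : A →ₗ[K] A →ₗ[K] A) (α : A →ₗ[K] A) : Prop :=
  (∀ x y, α (mul x y) = mul (α x) (α y)) ∧
  (∀ x y z, mul (mul x y) (α z) - mul (α x) (mul y z)
      = mul (mul y x) (α z) - mul (α y) (mul x z))

/-- A representation of a Hom-Lie algebra `(L, bracket, α)` on `V` with respect to `β`. -/
def IsHomLieRep {K L V : Type*} [Field K] [AddCommGroup L] [Module K L]
    [AddCommGroup V] [Module K V]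
    (bracket : L →ₗ[K] L →ₗ[K] L) (α : L →ₗ[K] L)
    (β : V →ₗ[K] V) (ρ : L →ₗ[K] Module.End K V) : Prop :=
  (∀ x, ρ (α x) ∘ₗ β = β ∘ₗ ρ x) ∧
  (∀ x y, ρ (bracket x y) ∘ₗ β = ρ (α x) ∘ₗ ρ y - ρ (α y) ∘ₗ ρ x)

/-- A representation `(V, β, ρ, μ)` of a Hom-pre-Lie algebra `(A, mul, α)`:
`ρ` is a representation of the sub-adjacent Hom-Lie algebra (whose bracket is the
commutator `mul - mul.flip`) with respect to `β`, together with the two compatibility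
conditions for `μ`. -/
def IsHomPreLieRep {K A V : Type*} [Field K] [AddCommGroup A] [Module K A]
    [AddCommGroup V] [Module K V]
    (mul : A →ₗ[K] A →ₗ[K] A) (α : A →ₗ[K] A)
    (β : V →ₗ[K] V) (ρ μ : A →ₗ[K] Module.End K V) : Prop :=
  IsHomLieRep (mul - mul.flip) α β ρ ∧
  (∀ x, β ∘ₗ μ x = μ (α x) ∘ₗ β) ∧
  (∀ x y, μ (α y) ∘ₗ μ x - μ (mul x y) ∘ₗ β = μ (α y) ∘ₗ ρ x - ρ (α x) ∘ₗ μ y)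

/-- The twisted dual map `ρ⋆ : A → gl(V*)`, defined by
`⟨ρ⋆(x)(ξ), u⟩ = −⟨ξ, β⁻²(ρ(α(x))(u))⟩`. -/
noncomputable def starRep {K A V : Type*} [Field K] [AddCommGroup A] [Module K A]
    [AddCommGroup V] [Module K V]
    (α : A →ₗ[K] A) (β : V ≃ₗ[K] V) (ρ : A →ₗ[K] Module.End K V) :
    A →ₗ[K] Module.End K (V →ₗ[K] K) where
  toFun x := - (((β.symm.toLinearMap ∘ₗ β.symm.toLinearMap) ∘ₗ ρ (α x)).dualMap :
      Module.End K (Module.Dual K V))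
  map_add' x y := by
    ext ξ u
    simp [LinearMap.dualMap_apply]
    abel
  map_smul' c x := by
    ext ξ u
    simp [LinearMap.dualMap_apply]

/-- Helper instance (port): current Lean's unifier no longer finds `LinearMap.addCommGroup`
for this type by itself; this supplies exactly that instance. -/
noncomputable instance instAddCommGroupStarRepCodomain {K A : Type*} [Field K] [AddCommGroup A]
    [Module K A] : AddCommGroup (A →ₗ[K] Module.End K (A →ₗ[K] K)) :=
  @LinearMap.addCommGroup K K A (Module.End K (A →ₗ[K] K)) _ _ _ LinearMap.addCommGroup _ _ _

@[simp]
theorem starRepCodomain_sub_apply {K A : Type*} [Field K] [AddCommGroup A] [Module K A]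
    (f g : A →ₗ[K] Module.End K (A →ₗ[K] K)) (x : A) : (f - g) x = f x - g x := rfl

@[simp]
theorem starRepCodomain_neg_apply {K A : Type*} [Field K] [AddCommGroup A] [Module K A]
    (f : A →ₗ[K] Module.End K (A →ₗ[K] K)) (x : A) : (-f) x = -(f x) := rfl

/-- Let `(A,·,α)` be a Hom-pre-Lie algebra, `L_x y = x·y`,
`R_x y = y·x`, and let `L⋆, R⋆ : A → gl(A*)` be defined by
`⟨L⋆(x)(ξ), u⟩ = −⟨ξ, α⁻²(α(x)·u)⟩` and `⟨R⋆(x)(ξ), u⟩ = −⟨ξ, α⁻²(u·α(x))⟩`.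
Then `(A*, (α⁻¹)*, L⋆ − R⋆, −R⋆)` is a representation of `(A,·,α)`.
(Here `L = mul` and `R = mul.flip`.) -/
theorem dual_regular_rep_isHomPreLieRep
    {K A : Type*} [Field K] [AddCommGroup A] [Module K A]
    (mul : A →ₗ[K] A →ₗ[K] A) (α : A ≃ₗ[K] A)
    (hA : IsHomPreLie mul (α : A →ₗ[K] A)) :
    IsHomPreLieRep mul (α : A →ₗ[K] A)
      (α.symm.toLinearMap.dualMap)
      (starRep (α : A →ₗ[K] A) α mul - starRep (α : A →ₗ[K] A) α mul.flip)
      (- starRep (α : A →ₗ[K] A) α mul.flip) := by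
  obtain ⟨h1, h2⟩ := hA
  have h1' : ∀ x y, α (mul x y) = mul (α x) (α y) := h1
  have hs : ∀ x y, α.symm (mul x y) = mul (α.symm x) (α.symm y) := by
    intro x y
    apply α.injective
    simp [h1']
  refine ⟨⟨?_, ?_⟩, ?_, ?_⟩
  · intro x
    ext ξ u
    simp [starRep, LinearMap.dualMap_apply, hs, h1']
  · intro x y
    ext ξ u
    simp [starRep, LinearMap.dualMap_apply, hs, h1']
    have ka := h2 (α.symm (α.symm x)) (α.symm (α.symm y))
      (α.symm (α.symm (α.symm (α.symm u))))
    have kb := h2 (α.symm (α.symm x)) (α.symm (α.symm (α.symm (α.symm u))))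
      (α.symm (α.symm y))
    have kc := h2 (α.symm (α.symm y)) (α.symm (α.symm (α.symm (α.symm u))))
      (α.symm (α.symm x))
    simp only [LinearEquiv.coe_coe, LinearEquiv.apply_symm_apply] at ka kb kc
    have ka' := congrArg ξ ka
    have kb' := congrArg ξ kb
    have kc' := congrArg ξ kc
    simp only [map_sub] at ka' kb' kc'
    linear_combination -ka' + kb' - kc'
  · intro x
    ext ξ u
    simp [starRep, LinearMap.dualMap_apply, hs, h1']
  · intro x y
    ext ξ u
    simp [starRep, LinearMap.dualMap_apply, hs, h1']
    have k := h2 (α.symm (α.symm x)) (α.symm (α.symm (α.symm (α.symm u))))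
      (α.symm (α.symm y))
    simp only [LinearEquiv.coe_coe, LinearEquiv.apply_symm_apply] at k
    have k' := congrArg ξ k
    simp only [map_sub] at k'
    linear_combination -k'
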